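/- Fix an integer h ≥ 2 and a divergent function f: ℕ → ℕ with f(n) = o(n^{h−1}). Then the family of all A ⊆ ℕ satisfying both liminf_{n→∞} r_{A,h}(n) = 0 and limsup_{n→∞} r_{A,h}(n)/f(n) = ∞ is comeager in 𝒫(ℕ). -/

import Mathlib

open Filter Topology Set
open scoped ENNReal

/-- Number of unordered representations of `x` as a sum of `h` elements of `A`
(repetitions allowed): multisets of size `h` with elements in `A` summing to `x`. -/
noncomputable def repCount {X : Type*} [AddCommMonoid X] (A : Set X) (h : ℕ) (x : X) : ℕ :=
  Nat.card {s : Multiset X // Multiset.card s = h ∧ (∀ a ∈ s, a ∈ A) ∧ s.sum = x}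

/-- `A` is a `B_h[g]` set: every `x` has at most `g` unordered representations. -/
def IsBhg {X : Type*} [AddCommMonoid X] (A : Set X) (h g : ℕ) : Prop :=
  ∀ x, repCount A h x ≤ g

/-- `A ⊆ ℕ` is a Sidon set. -/
def IsSidonSet (A : Set ℕ) : Prop :=
  ∀ a b c d, a ∈ A → b ∈ A → c ∈ A → d ∈ A → a ≤ b → c ≤ d → a + b = c + d → a = c ∧ b = d

/-- Lower asymptotic density. -/
noncomputable def lowerDensity (S : Set ℕ) : ℝ :=
  Filter.liminf (fun n => ((S ∩ Set.Ico 0 n).ncard : ℝ) / n) Filter.atTop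

/-- Upper asymptotic density. -/
noncomputable def upperDensity (S : Set ℕ) : ℝ :=
  Filter.limsup (fun n => ((S ∩ Set.Ico 0 n).ncard : ℝ) / n) Filter.atTop

lemma repCount_congr {A B : Set ℕ} {h n : ℕ} (hAB : ∀ m ≤ n, (m ∈ A ↔ m ∈ B)) :
    repCount A h n = repCount B h n := by
  unfold repCount
  apply Nat.card_congr
  apply Equiv.subtypeEquivRight
  intro s
  have key : s.sum = n → ∀ a ∈ s, a ≤ n := by
    intro hs a ha
    simpa [hs] using Multiset.single_le_sum (fun x _ => Nat.zero_le x) a ha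
  constructor
  · rintro ⟨h1, h2, h3⟩
    exact ⟨h1, fun a ha => (hAB a (key h3 a ha)).mp (h2 a ha), h3⟩
  · rintro ⟨h1, h2, h3⟩
    exact ⟨h1, fun a ha => (hAB a (key h3 a ha)).mpr (h2 a ha), h3⟩

instance repFinite (A : Set ℕ) (h n : ℕ) :
    Finite {s : Multiset ℕ // Multiset.card s = h ∧ (∀ a ∈ s, a ∈ A) ∧ s.sum = n} := by
  apply Finite.of_injective
    (β := (((Finset.range (n + 1)).sym h : Finset (Sym ℕ h)) : Set (Sym ℕ h)))
    (fun s => ⟨Sym.mk s.1 s.2.1, by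
      rw [Finset.mem_coe, Finset.mem_sym_iff]
      intro a ha
      have : a ∈ s.1 := ha
      have hle : a ≤ n := by
        have := Multiset.single_le_sum (fun x _ => Nat.zero_le x) a this
        simpa [s.2.2.2] using this
      simp [Finset.mem_range, Nat.lt_succ_iff, hle]⟩)
  intro s₁ s₂ hs
  have : s₁.1 = s₂.1 := congrArg (fun t => t.1.1) hs
  exact Subtype.ext this

lemma repCount_eq_zero {A : Set ℕ} {h n : ℕ}
    (hno : ∀ s : Multiset ℕ, Multiset.card s = h → (∀ a ∈ s, a ∈ A) → s.sum ≠ n) :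
    repCount A h n = 0 := by
  have : IsEmpty {s : Multiset ℕ // Multiset.card s = h ∧ (∀ a ∈ s, a ∈ A) ∧ s.sum = n} :=
    ⟨fun s => hno s.1 s.2.1 s.2.2.1 s.2.2.2⟩
  exact Nat.card_of_isEmpty

lemma repCount_ge {B : Set ℕ} (h c D : ℕ) (hh : 2 ≤ h) (hD : 1 ≤ D)
    (hB : ∀ m, c ≤ m → m ∈ B) :
    D ^ (h - 1) ≤ repCount B h (h * (c + (h - 1) * D)) := by
  set k := h - 1 with hk
  have hk1 : 1 ≤ k := by omega
  set M := c + k * D with hM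
  have hM1 : c + 1 ≤ M := by have : 1 * 1 ≤ k * D := Nat.mul_le_mul hk1 hD; omega
  set n := h * M with hn
  have hnM : n = k * M + M := by rw [hn]; have : h = k + 1 := by omega
                                 rw [this]; ring
  set T : (Fin k → Fin D) → Multiset ℕ :=
    fun g => Multiset.map (fun i : Fin k => c + (i : ℕ) * D + (g i : ℕ)) Finset.univ.val with hT
  have hTcard : ∀ g, Multiset.card (T g) = k := by
    intro g; simp [hT]
  have hTmem : ∀ g, ∀ x ∈ T g, c ≤ x ∧ x + 1 ≤ M := by
    intro g x hx
    simp only [hT, Multiset.mem_map] at hx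
    obtain ⟨i, -, rfl⟩ := hx
    refine ⟨by omega, ?_⟩
    have h1 : ((i : ℕ) + 1) * D ≤ k * D := Nat.mul_le_mul_right _ (by omega)
    have h2 : (g i : ℕ) < D := (g i).2
    have : ((i : ℕ) + 1) * D = (i : ℕ) * D + D := by ring
    omega
  have hSum : ∀ g, (T g).sum + M ≤ n := by
    intro g
    have h1 : (T g).sum ≤ Multiset.card (T g) • (M - 1) :=
      Multiset.sum_le_card_nsmul (T g) (M - 1) (fun x hx => by have := hTmem g x hx; omega)
    rw [hTcard] at h1
    have h2 : k • (M - 1) + k = k * M := by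
      rw [smul_eq_mul]
      have : (M - 1) + 1 = M := by omega
      calc k * (M - 1) + k = k * ((M - 1) + 1) := by ring
        _ = k * M := by rw [this]
    omega
  set F : (Fin k → Fin D) → Multiset ℕ := fun g => (n - (T g).sum) ::ₘ T g with hF
  have hprop : ∀ g, Multiset.card (F g) = h ∧ (∀ a ∈ F g, a ∈ B) ∧ (F g).sum = n := by
    intro g
    refine ⟨by simp [hF, hTcard g]; omega, ?_, ?_⟩
    · intro a ha
      rcases Multiset.mem_cons.mp ha with rfl | ha
      · exact hB _ (by have := hSum g; omega)
      · exact hB _ (hTmem g a ha).1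
    · simp only [hF, Multiset.sum_cons]
      have := hSum g; omega
  have key : ∀ g₁ g₂, F g₁ = F g₂ → ∀ i, g₁ i = g₂ i := by
    intro g₁ g₂ he i
    have hx : c + (i : ℕ) * D + (g₁ i : ℕ) ∈ F g₂ := by
      rw [← he]
      apply Multiset.mem_cons_of_mem
      simp only [hT, Multiset.mem_map]
      exact ⟨i, by simp, rfl⟩
    have hxb : c + (i : ℕ) * D + (g₁ i : ℕ) + 1 ≤ M := by
      refine (hTmem g₁ _ ?_).2
      simp only [hT, Multiset.mem_map]
      exact ⟨i, by simp, rfl⟩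
    rcases Multiset.mem_cons.mp hx with h1 | h2
    · exfalso
      have := hSum g₂
      omega
    · obtain ⟨j, -, hj⟩ := Multiset.mem_map.mp h2
      have hgi : (g₁ i : ℕ) < D := (g₁ i).2
      have hgj : (g₂ j : ℕ) < D := (g₂ j).2
      have hij : (i : ℕ) = (j : ℕ) := by
        rcases lt_trichotomy (i : ℕ) (j : ℕ) with hlt | heq | hgt
        · have h3 : ((i : ℕ) + 1) * D ≤ (j : ℕ) * D := Nat.mul_le_mul_right _ (by omega)
          have h4 : ((i : ℕ) + 1) * D = (i : ℕ) * D + D := by ring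
          omega
        · exact heq
        · have h3 : ((j : ℕ) + 1) * D ≤ (i : ℕ) * D := Nat.mul_le_mul_right _ (by omega)
          have h4 : ((j : ℕ) + 1) * D = (j : ℕ) * D + D := by ring
          omega
      have : j = i := Fin.ext hij.symm
      subst this
      exact Fin.ext (by omega)
  calc D ^ (h - 1) = Nat.card (Fin k → Fin D) := by
        simp [Nat.card_eq_fintype_card, hk]
    _ ≤ Nat.card {s : Multiset ℕ // Multiset.card s = h ∧ (∀ a ∈ s, a ∈ B) ∧ s.sum = n} := by
        apply Nat.card_le_card_of_injective (fun g => ⟨F g, hprop g⟩)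
        intro g₁ g₂ hgg
        exact funext (key g₁ g₂ (congrArg Subtype.val hgg))
    _ = repCount B h n := rfl

lemma cyl_mem_nhds (A : ℕ → Bool) (n : ℕ) :
    {B : ℕ → Bool | ∀ m ≤ n, B m = A m} ∈ nhds A := by
  have he : {B : ℕ → Bool | ∀ m ≤ n, B m = A m}
      = ⋂ m ∈ Finset.range (n + 1), {B : ℕ → Bool | B m = A m} := by
    ext B; simp [Nat.lt_succ_iff]
  rw [he, Filter.biInter_finset_mem]
  intro m _
  have : IsOpen {B : ℕ → Bool | B m = A m} := by
    have : {B : ℕ → Bool | B m = A m} = (fun B : ℕ → Bool => B m) ⁻¹' {A m} := rfl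
    rw [this]
    exact (continuous_apply m).isOpen_preimage _ (isOpen_discrete _)
  exact this.mem_nhds rfl

lemma dense_of_ext {S : Set (ℕ → Bool)}
    (hS : ∀ (A : ℕ → Bool) (k : ℕ), ∃ B ∈ S, ∀ m ≤ k, B m = A m) : Dense S := by
  rw [dense_iff_inter_open]
  rintro U hU ⟨A, hA⟩
  obtain ⟨I, u, hu, hsub⟩ := isOpen_pi_iff.mp hU A hA
  obtain ⟨B, hBS, hBA⟩ := hS A (I.sup id)
  refine ⟨B, hsub fun i hi => ?_, hBS⟩
  rw [hBA i (Finset.le_sup (f := id) hi)]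
  exact (hu i hi).2

theorem stmt10 (h : ℕ) (hh : 2 ≤ h) (f : ℕ → ℕ)
    (hdiv : Filter.Tendsto f Filter.atTop Filter.atTop)
    (hsmall : Filter.Tendsto (fun n : ℕ => (f n : ℝ) / (n : ℝ) ^ (h - 1))
      Filter.atTop (nhds 0)) :
    {A : ℕ → Bool |
      Filter.liminf (fun n => (repCount {m | A m = true} h n : ℝ≥0∞)) Filter.atTop = 0 ∧
      Filter.limsup
        (fun n => (repCount {m | A m = true} h n : ℝ≥0∞) / (f n : ℝ≥0∞)) Filter.atTop = ⊤}
      ∈ residual (ℕ → Bool) := by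
  set U : ℕ → Set (ℕ → Bool) :=
    fun N => {A | ∃ n, N ≤ n ∧ repCount {m | A m = true} h n = 0} with hUdef
  set V : ℕ → ℕ → Set (ℕ → Bool) := fun M N =>
    {A | ∃ n, N ≤ n ∧ 1 ≤ f n ∧ M * f n ≤ repCount {m | A m = true} h n} with hVdef
  have loc : ∀ (A B : ℕ → Bool) (n : ℕ), (∀ m ≤ n, B m = A m) →
      repCount {m | B m = true} h n = repCount {m | A m = true} h n := by
    intro A B n hBA
    exact repCount_congr (fun m hm => by simp [Set.mem_setOf_eq, hBA m hm])
  have Uopen : ∀ N, IsOpen (U N) := by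
    intro N
    rw [isOpen_iff_mem_nhds]
    rintro A ⟨n, hn, h0⟩
    filter_upwards [cyl_mem_nhds A n] with B hB
    exact ⟨n, hn, by rw [loc A B n hB]; exact h0⟩
  have Vopen : ∀ M N, IsOpen (V M N) := by
    intro M N
    rw [isOpen_iff_mem_nhds]
    rintro A ⟨n, hn, hf1, hle⟩
    filter_upwards [cyl_mem_nhds A n] with B hB
    exact ⟨n, hn, hf1, by rw [loc A B n hB]; exact hle⟩
  have Udense : ∀ N, Dense (U N) := by
    intro N
    apply dense_of_ext
    intro A k
    refine ⟨fun m => if m ≤ k then A m else false,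
      ⟨max N (h * k + 1), le_max_left _ _, ?_⟩, fun m hm => if_pos hm⟩
    apply repCount_eq_zero
    intro s hcard hmem hsum
    have hle : ∀ a ∈ s, a ≤ k := by
      intro a ha
      have hmm := hmem a ha
      simp only [Set.mem_setOf_eq] at hmm
      by_contra hak
      rw [if_neg (by omega)] at hmm
      exact Bool.noConfusion hmm
    have h1 := Multiset.sum_le_card_nsmul s k hle
    rw [hcard, smul_eq_mul] at h1
    have h2 : h * k + 1 ≤ max N (h * k + 1) := le_max_right _ _
    omega
  have Vdense : ∀ M N, Dense (V M N) := by
    intro M N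
    apply dense_of_ext
    intro A k
    set B : ℕ → Bool := fun m => if m ≤ k then A m else true with hB
    set c := k + 1 with hc
    have hBc : ∀ m, c ≤ m → m ∈ {m | B m = true} := by
      intro m hm
      simp only [Set.mem_setOf_eq, hB]
      rw [if_neg (by omega)]
    set K := h * c + h * (h - 1) with hK
    have hKpos : 0 < K := by positivity
    have hKpow : (0 : ℝ) < (K : ℝ) ^ (h - 1) := by positivity
    set ε : ℝ := 1 / ((M + 1) * (K : ℝ) ^ (h - 1)) with hε
    have hε0 : 0 < ε := by positivity
    have h1 : ∀ᶠ n in atTop, (f n : ℝ) / (n : ℝ) ^ (h - 1) < ε :=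
      hsmall.eventually (gt_mem_nhds hε0)
    obtain ⟨T₁, hT₁⟩ := eventually_atTop.mp h1
    obtain ⟨T₂, hT₂⟩ := eventually_atTop.mp (hdiv.eventually_ge_atTop 1)
    set D := max 1 (max N (max T₁ T₂)) with hD
    have hD1 : 1 ≤ D := le_max_left _ _
    set n := h * (c + (h - 1) * D) with hn
    have hnalt : n = h * c + h * ((h - 1) * D) := by rw [hn]; ring
    have hDn : D ≤ n := by
      have e1 : 1 * (1 * D) ≤ h * ((h - 1) * D) :=
        Nat.mul_le_mul (by omega) (Nat.mul_le_mul (by omega) le_rfl)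
      omega
    have hNn : N ≤ n := le_trans (le_trans (le_max_left _ _) (le_max_right _ _)) hDn
    have hT₁n : T₁ ≤ n :=
      le_trans (le_trans (le_trans (le_max_left _ _) (le_max_right _ _)) (le_max_right _ _)) hDn
    have hT₂n : T₂ ≤ n :=
      le_trans (le_trans (le_trans (le_max_right _ _) (le_max_right _ _)) (le_max_right _ _)) hDn
    have hf1 : 1 ≤ f n := hT₂ n hT₂n
    have hnpos : 0 < n := by omega
    have hfn : (f n : ℝ) < ε * (n : ℝ) ^ (h - 1) := by
      have h2 := hT₁ n hT₁n
      rwa [div_lt_iff₀ (by positivity : (0 : ℝ) < (n : ℝ) ^ (h - 1))] at h2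
    have hnK : (n : ℝ) ≤ (K : ℝ) * (D : ℝ) := by
      have e2 : h * c ≤ h * c * D := Nat.le_mul_of_pos_right _ (by omega)
      have e3 : K * D = h * c * D + h * ((h - 1) * D) := by rw [hK]; ring
      have e4 : n ≤ K * D := by omega
      exact_mod_cast e4
    have hnpow : ((n : ℝ)) ^ (h - 1) ≤ (K : ℝ) ^ (h - 1) * (D : ℝ) ^ (h - 1) := by
      rw [← mul_pow]
      exact pow_le_pow_left₀ (by positivity) hnK _
    have hMf : (M : ℝ) * (f n : ℝ) ≤ ((D : ℕ) : ℝ) ^ (h - 1) := by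
      have step1 : (M : ℝ) * (f n : ℝ)
          ≤ (M : ℝ) * (ε * ((K : ℝ) ^ (h - 1) * (D : ℝ) ^ (h - 1))) := by
        apply mul_le_mul_of_nonneg_left _ (Nat.cast_nonneg M)
        calc (f n : ℝ) ≤ ε * (n : ℝ) ^ (h - 1) := hfn.le
          _ ≤ ε * ((K : ℝ) ^ (h - 1) * (D : ℝ) ^ (h - 1)) :=
            mul_le_mul_of_nonneg_left hnpow hε0.le
      have step2 : (M : ℝ) * (ε * ((K : ℝ) ^ (h - 1) * (D : ℝ) ^ (h - 1)))
          = ((M : ℝ) / (M + 1)) * (D : ℝ) ^ (h - 1) := by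
        rw [hε]; field_simp
      have step3 : ((M : ℝ) / (M + 1)) * (D : ℝ) ^ (h - 1) ≤ (D : ℝ) ^ (h - 1) := by
        have : (M : ℝ) / (M + 1) ≤ 1 := by
          rw [div_le_one (by positivity)]; linarith
        nlinarith [pow_nonneg (Nat.cast_nonneg D : (0:ℝ) ≤ (D:ℝ)) (h - 1)]
      calc (M : ℝ) * (f n : ℝ) ≤ _ := step1
        _ = _ := step2
        _ ≤ _ := step3
    have hMfn : M * f n ≤ D ^ (h - 1) := by exact_mod_cast (by push_cast at hMf ⊢; exact hMf :
      ((M * f n : ℕ) : ℝ) ≤ ((D ^ (h - 1) : ℕ) : ℝ))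
    have hrep : D ^ (h - 1) ≤ repCount {m | B m = true} h n :=
      repCount_ge h c D hh hD1 hBc
    exact ⟨B, ⟨n, hNn, hf1, le_trans hMfn hrep⟩, fun m hm => if_pos hm⟩
  have hmem : ((⋂ N, U N) ∩ ⋂ M, ⋂ N, V M N) ∈ residual (ℕ → Bool) := by
    apply Filter.inter_mem
    · exact countable_iInter_mem.mpr fun N => residual_of_dense_open (Uopen N) (Udense N)
    · exact countable_iInter_mem.mpr fun M => countable_iInter_mem.mpr fun N =>
        residual_of_dense_open (Vopen M N) (Vdense M N)
  apply Filter.mem_of_superset hmem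
  rintro A ⟨hA1, hA2⟩
  constructor
  · have hfreq : ∃ᶠ n in atTop, (repCount {m | A m = true} h n : ℝ≥0∞) ≤ 0 := by
      rw [frequently_atTop]
      intro N
      obtain ⟨n, hn, h0⟩ := Set.mem_iInter.mp hA1 N
      exact ⟨n, hn, by simp [h0]⟩
    have := Filter.liminf_le_of_frequently_le' hfreq
    exact le_antisymm this zero_le
  · by_contra hne
    obtain ⟨M, hM⟩ := ENNReal.exists_nat_gt hne
    have hfreq : ∃ᶠ n in atTop,
        (M : ℝ≥0∞) ≤ (repCount {m | A m = true} h n : ℝ≥0∞) / (f n : ℝ≥0∞) := by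
      rw [frequently_atTop]
      intro N
      obtain ⟨n, hn, hf1, hle⟩ := Set.mem_iInter.mp (Set.mem_iInter.mp hA2 M) N
      refine ⟨n, hn, ?_⟩
      rw [ENNReal.le_div_iff_mul_le
        (Or.inl (by exact_mod_cast (by omega : f n ≠ 0) : ((f n : ℝ≥0∞)) ≠ 0))
        (Or.inl (ENNReal.natCast_ne_top _))]
      calc (M : ℝ≥0∞) * (f n : ℝ≥0∞) = ((M * f n : ℕ) : ℝ≥0∞) := by push_cast; ring
        _ ≤ _ := by exact_mod_cast hle
    have hge := Filter.le_limsup_of_frequently_le' hfreq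
    exact absurd hge (not_le.mpr hM)
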